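/- Quadratic-variation-type partition bound: assume H_i > 1/2 for every i ∈ {1,…,N} with a_i ≠ 0, let a ∈ ℝ^N \ {0}, let H_{i₀} = min{H_i : a_i ≠ 0}, and let t > 0. Then with C₂ = Σ_{i=1}^N a_i² ν_i t^{2(H_i − H_{i₀})} (where ν_i = 1 if H_i > 1/2 and ν_i = 2 − 2^{2H_i−1} otherwise), for every finite partition 0 = t_0 < t_1 < … < t_n = t of [0,t] with mesh |τ| = max_{1≤j≤n} (t_j − t_{j−1}), one has Σ_{j=1}^n f(t_{j−1}, t_j) ≤ C₂ · |τ|^{2H_{i₀}−1} · t. (Hence E(Σ_j (S_{t_j}^H − S_{t_{j−1}}^H)²) → 0 as the mesh tends to 0, so the quadratic variation of S^H(N,a) vanishes almost surely.) -/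

import Mathlib

open Real Finset

/-- The sub-fractional Brownian covariance. -/
noncomputable def subCov (H s t : ℝ) : ℝ :=
  s ^ (2 * H) + t ^ (2 * H) - (1 / 2) * ((s + t) ^ (2 * H) + |t - s| ^ (2 * H))

/-- The mixed sub-fractional covariance `C(s,t) = Σ_i a_i² c_{H_i}(s,t)`. -/
noncomputable def mixedCov (N : ℕ) (a H : Fin N → ℝ) (s t : ℝ) : ℝ :=
  ∑ i, (a i) ^ 2 * subCov (H i) s t

/-- The increment variance `f(s,t) = C(t,t) + C(s,s) − 2 C(s,t)`. -/
noncomputable def incVar (N : ℕ) (a H : Fin N → ℝ) (s t : ℝ) : ℝ :=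
  mixedCov N a H t t + mixedCov N a H s s - 2 * mixedCov N a H s t

/-- `ν_i = 1` if `H_i > 1/2`, and `2 − 2^{2H_i−1}` otherwise. -/
noncomputable def nu (h : ℝ) : ℝ := if 1 / 2 < h then 1 else 2 - (2 : ℝ) ^ (2 * h - 1)


lemma real_two_pow_ineq (a b p : ℝ) (ha : 0 ≤ a) (hb : 0 ≤ b) (hp : 1 ≤ p) :
    (a + b) ^ p ≤ (2:ℝ) ^ (p - 1) * (a ^ p + b ^ p) := by
  have h := NNReal.rpow_add_le_mul_rpow_add_rpow ⟨a, ha⟩ ⟨b, hb⟩ hp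
  have := NNReal.coe_le_coe.2 h
  push_cast at this
  convert this using 3 <;> rfl

lemma key (h s u : ℝ) (hs : 0 ≤ s) (hsu : s ≤ u) (hh : 1/2 < h) :
    subCov h u u + subCov h s s - 2 * subCov h s u ≤ (u - s) ^ (2 * h) := by
  have hu : (0:ℝ) ≤ u := hs.trans hsu
  have h2h : (1:ℝ) ≤ 2 * h := by linarith
  have h2hne : (2 * h) ≠ 0 := by positivity
  have hz : (0:ℝ) ^ (2 * h) = 0 := Real.zero_rpow h2hne
  have habs : |u - s| = u - s := abs_of_nonneg (by linarith)
  have key2 : (s + u) ^ (2 * h) ≤ (2:ℝ) ^ (2 * h - 1) * (s ^ (2*h) + u ^ (2*h)) :=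
    real_two_pow_ineq s u (2*h) hs hu h2h
  have e3 : (2:ℝ)^(2*h) = 2 * (2:ℝ)^(2*h-1) := by
    nth_rewrite 1 [show (2*h) = 1 + (2*h-1) by ring]
    rw [Real.rpow_add (by norm_num), Real.rpow_one]
  have e1 : (u + u) ^ (2*h) = 2 * (2:ℝ)^(2*h-1) * u ^ (2*h) := by
    rw [← two_mul, Real.mul_rpow (by norm_num) hu, e3]
  have e2 : (s + s) ^ (2*h) = 2 * (2:ℝ)^(2*h-1) * s ^ (2*h) := by
    rw [← two_mul, Real.mul_rpow (by norm_num) hs, e3]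
  simp only [subCov, habs, sub_self, abs_zero, hz]
  nlinarith [key2]

lemma incVar_eq (N : ℕ) (a H : Fin N → ℝ) (s u : ℝ) :
    incVar N a H s u
      = ∑ i, (a i) ^ 2 * (subCov (H i) u u + subCov (H i) s s - 2 * subCov (H i) s u) := by
  rw [incVar, mixedCov, mixedCov, mixedCov, Finset.mul_sum, ← Finset.sum_add_distrib,
    ← Finset.sum_sub_distrib]
  exact Finset.sum_congr rfl fun i _ => by ring

/-- Quadratic-variation-type partition bound: if `H_i > 1/2` whenever `a_i ≠ 0`, then for
any finite partition `0 = τ_0 < τ_1 < … < τ_n = t` of `[0,t]` with mesh `|τ|`,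
`Σ_{j=1}^n E(S_{τ_j}^H − S_{τ_{j−1}}^H)² ≤ C₂ |τ|^{2H_{i₀}−1} t`, where
`C₂ = Σ_i a_i² ν_i t^{2(H_i−H_{i₀})}` and `H_{i₀} = min{H_i : a_i ≠ 0}`. -/
theorem msfbm_quadratic_variation_bound (N : ℕ) (a H : Fin N → ℝ)
    (hH : ∀ i, H i ∈ Set.Ioo (0 : ℝ) 1) (ha : a ≠ 0)
    (hbig : ∀ i, a i ≠ 0 → 1 / 2 < H i)
    (i₀ : Fin N) (hai₀ : a i₀ ≠ 0) (hmin : ∀ i, a i ≠ 0 → H i₀ ≤ H i)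
    (t : ℝ) (ht : 0 < t)
    (n : ℕ) (hn : 1 ≤ n) (τ : ℕ → ℝ) (hτ0 : τ 0 = 0) (hτn : τ n = t)
    (hmono : ∀ j < n, τ j < τ (j + 1))
    (mesh : ℝ) (hmesh : IsGreatest {d : ℝ | ∃ j < n, d = τ (j + 1) - τ j} mesh) :
    ∑ j ∈ Finset.range n, incVar N a H (τ j) (τ (j + 1))
      ≤ (∑ i, (a i) ^ 2 * nu (H i) * t ^ (2 * (H i - H i₀)))
          * mesh ^ (2 * H i₀ - 1) * t := by
  -- basic facts
  have hτnn : ∀ j, j ≤ n → 0 ≤ τ j := by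
    intro j hj
    induction j with
    | zero => simp [hτ0]
    | succ k ih =>
        have hk : k < n := hj
        exact le_of_lt (lt_of_le_of_lt (ih (le_of_lt hk)) (hmono k hk))
  have hsumΔ : ∑ j ∈ Finset.range n, (τ (j+1) - τ j) = t := by
    rw [Finset.sum_range_sub, hτ0, hτn, sub_zero]
  have hΔle : ∀ j, j < n → τ (j+1) - τ j ≤ mesh := fun j hj => hmesh.2 ⟨j, hj, rfl⟩
  obtain ⟨j₁, hj₁, hmeq⟩ := hmesh.1
  have hmeshpos : 0 < mesh := by
    rw [hmeq]; have := hmono j₁ hj₁; linarith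
  have hmesht : mesh ≤ t := by
    rw [← hsumΔ, hmeq]
    refine Finset.single_le_sum (f := fun j => τ (j+1) - τ j) ?_ (Finset.mem_range.mpr hj₁)
    intro j hj
    have := hmono j (Finset.mem_range.mp hj)
    show 0 ≤ τ (j + 1) - τ j
    linarith
  have hi₀ : 1/2 < H i₀ := hbig i₀ hai₀
  -- rewrite sums
  have hrw : ∑ j ∈ Finset.range n, incVar N a H (τ j) (τ (j + 1))
      = ∑ i, ∑ j ∈ Finset.range n, (a i) ^ 2 *
          (subCov (H i) (τ (j+1)) (τ (j+1)) + subCov (H i) (τ j) (τ j)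
            - 2 * subCov (H i) (τ j) (τ (j+1))) := by
    rw [Finset.sum_comm]
    exact Finset.sum_congr rfl fun j _ => incVar_eq N a H (τ j) (τ (j+1))
  rw [hrw, Finset.sum_mul, Finset.sum_mul]
  apply Finset.sum_le_sum
  intro i _
  by_cases hai : a i = 0
  · simp [hai]
  · have hHi : 1/2 < H i := hbig i hai
    have hHi0le : H i₀ ≤ H i := hmin i hai
    have hnu : nu (H i) = 1 := if_pos hHi
    rw [hnu]
    have hkey : ∀ j, j < n →
        subCov (H i) (τ (j+1)) (τ (j+1)) + subCov (H i) (τ j) (τ j)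
          - 2 * subCov (H i) (τ j) (τ (j+1)) ≤ (τ (j+1) - τ j) ^ (2 * H i) := by
      intro j hj
      exact key (H i) (τ j) (τ (j+1)) (hτnn j (le_of_lt hj)) (le_of_lt (hmono j hj)) hHi
    have hterm : ∀ j, j < n →
        (τ (j+1) - τ j) ^ (2 * H i)
          ≤ t ^ (2 * (H i - H i₀)) * mesh ^ (2 * H i₀ - 1) * (τ (j+1) - τ j) := by
      intro j hj
      set Δ := τ (j+1) - τ j with hΔ
      have hΔpos : 0 < Δ := by have := hmono j hj; simp [hΔ]; linarith
      have hΔm : Δ ≤ mesh := hΔle j hj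
      have hΔt : Δ ≤ t := hΔm.trans hmesht
      have hsplit : Δ ^ (2 * H i)
          = Δ ^ (2 * (H i - H i₀)) * Δ ^ (2 * H i₀ - 1) * Δ := by
        rw [show (2 * H i) = (2 * (H i - H i₀)) + ((2 * H i₀ - 1) + 1) by ring,
          Real.rpow_add hΔpos, Real.rpow_add hΔpos, Real.rpow_one, mul_assoc]
      rw [hsplit]
      have h1 : Δ ^ (2 * (H i - H i₀)) ≤ t ^ (2 * (H i - H i₀)) :=
        Real.rpow_le_rpow (le_of_lt hΔpos) hΔt (by linarith)
      have h2 : Δ ^ (2 * H i₀ - 1) ≤ mesh ^ (2 * H i₀ - 1) :=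
        Real.rpow_le_rpow (le_of_lt hΔpos) hΔm (by linarith)
      have hp1 : (0:ℝ) ≤ Δ ^ (2 * (H i - H i₀)) := Real.rpow_nonneg (le_of_lt hΔpos) _
      have hp2 : (0:ℝ) ≤ Δ ^ (2 * H i₀ - 1) := Real.rpow_nonneg (le_of_lt hΔpos) _
      have hp3 : (0:ℝ) ≤ mesh ^ (2 * H i₀ - 1) := Real.rpow_nonneg (le_of_lt hmeshpos) _
      have ht1 : (0:ℝ) ≤ t ^ (2 * (H i - H i₀)) := Real.rpow_nonneg (le_of_lt ht) _
      nlinarith [mul_le_mul h1 h2 hp2 ht1, hΔpos.le]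
    calc ∑ j ∈ Finset.range n, (a i) ^ 2 *
          (subCov (H i) (τ (j+1)) (τ (j+1)) + subCov (H i) (τ j) (τ j)
            - 2 * subCov (H i) (τ j) (τ (j+1)))
        ≤ ∑ j ∈ Finset.range n, (a i) ^ 2 *
            (t ^ (2 * (H i - H i₀)) * mesh ^ (2 * H i₀ - 1) * (τ (j+1) - τ j)) := by
          apply Finset.sum_le_sum
          intro j hj
          have hj' := Finset.mem_range.mp hj
          exact mul_le_mul_of_nonneg_left
            ((hkey j hj').trans (hterm j hj')) (sq_nonneg (a i))
      _ = (a i) ^ 2 * 1 * t ^ (2 * (H i - H i₀)) * mesh ^ (2 * H i₀ - 1) * t := by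
          rw [← Finset.mul_sum, ← Finset.mul_sum, hsumΔ]; ring
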